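/- arXiv:1312.5901 — 2 statements merged into one kernel-verified Lean document; each statement's English description precedes it below -/
import Mathlib

section
/- Let {X(t)} be a time-homogeneous, simple, conservative, stable continuous-time Markov counting process with rate function λ_X, and let {N(t)} be an independent unit-rate Poisson process. Then the time-changed process S(t) = X(N(t)) is a Markov process whose transition rate from state s to state s+k (k ≥ 1) equals P(X(1) = s+k | X(0) = s). -/
open Filter Topology

/-- Transition semigroup of a time-homogeneous conservative Markov counting process:
`P t x y` is the probability of being in state `y` at time `t` given state `x` at time `0`. -/
structure MarkovCountingSemigroup (P : ℝ → ℕ → ℕ → ℝ) : Prop where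
  nonneg : ∀ t x y, 0 ≤ t → 0 ≤ P t x y
  init : ∀ x y, P 0 x y = if x = y then 1 else 0
  counting : ∀ t x y, 0 ≤ t → y < x → P t x y = 0
  conservative : ∀ t x, 0 ≤ t → (∑' y : ℕ, P t x y) = 1
  chapman : ∀ t u x y, 0 ≤ t → 0 ≤ u →
    P (t + u) x y = ∑' z : ℕ, P t x z * P u z y

/-- The process is simple (only jumps of size one, i.e. the rate of jumps of size `k ≥ 2`
vanishes) and stable with (finite) rate function `lam`. -/
def IsSimpleStable (P : ℝ → ℕ → ℕ → ℝ) (lam : ℕ → ℝ) : Prop :=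
  (∀ x, Tendsto (fun h : ℝ => (1 - P h x x) / h) (𝓝[>] 0) (𝓝 (lam x))) ∧
  (∀ x, Tendsto (fun h : ℝ => P h x (x + 1) / h) (𝓝[>] 0) (𝓝 (lam x))) ∧
  (∀ x k, 2 ≤ k → Tendsto (fun h : ℝ => P h x (x + k) / h) (𝓝[>] 0) (𝓝 0))

/-- Poisson probability mass function with mean `t`. -/
noncomputable def poissonPMF (t : ℝ) (n : ℕ) : ℝ :=
  Real.exp (-t) * t ^ n / n.factorial

/-- Transition probabilities of the time-changed process `S(t) = X(N(t))`, where `N` is a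
unit-rate Poisson process independent of `X`: the Poisson mixture of those of `X`. -/
noncomputable def timeChanged (P : ℝ → ℕ → ℕ → ℝ) (t : ℝ) (x y : ℕ) : ℝ :=
  ∑' n : ℕ, poissonPMF t n * P (n : ℝ) x y

section Stmt0Aux

lemma pois_nonneg {t : ℝ} (ht : 0 ≤ t) (n : ℕ) : 0 ≤ poissonPMF t n := by
  unfold poissonPMF; positivity

lemma pois_summable (t : ℝ) : Summable (fun n => poissonPMF t n) := by
  unfold poissonPMF
  simpa [mul_div_assoc] using (Real.summable_pow_div_factorial t).mul_left (Real.exp (-t))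

lemma pois_tsum (t : ℝ) : ∑' n, poissonPMF t n = 1 := by
  unfold poissonPMF
  have h : ∑' n : ℕ, t ^ n / n.factorial = Real.exp t := by
    rw [Real.exp_eq_exp_ℝ, NormedSpace.exp_eq_tsum_div]
  simp_rw [mul_div_assoc]
  rw [tsum_mul_left, h, ← Real.exp_add]
  simp

lemma pois_conv (t u : ℝ) (n : ℕ) :
    poissonPMF (t + u) n
      = ∑ q ∈ Finset.HasAntidiagonal.antidiagonal n, poissonPMF t q.1 * poissonPMF u q.2 := by
  rw [Finset.Nat.sum_antidiagonal_eq_sum_range_succ_mk]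
  have key : ∀ k ∈ Finset.range (n + 1),
      poissonPMF t k * poissonPMF u (n - k)
        = Real.exp (-(t + u)) / n.factorial * (t ^ k * u ^ (n - k) * n.choose k) := by
    intro k hk
    have hk' : k ≤ n := Nat.lt_succ_iff.mp (Finset.mem_range.mp hk)
    have hfac : (n.choose k : ℝ) * k.factorial * (n - k).factorial = n.factorial := by
      exact_mod_cast congrArg (Nat.cast : ℕ → ℝ) (Nat.choose_mul_factorial_mul_factorial hk')
    unfold poissonPMF
    rw [neg_add, Real.exp_add]
    have h1 : (k.factorial : ℝ) ≠ 0 := Nat.cast_ne_zero.mpr k.factorial_ne_zero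
    have h2 : ((n - k).factorial : ℝ) ≠ 0 := Nat.cast_ne_zero.mpr (n - k).factorial_ne_zero
    have h3 : (n.factorial : ℝ) ≠ 0 := Nat.cast_ne_zero.mpr n.factorial_ne_zero
    field_simp
    linear_combination -(t ^ k * u ^ (n - k)) * hfac
  rw [Finset.sum_congr rfl key, ← Finset.mul_sum]
  unfold poissonPMF
  rw [add_pow]
  ring

variable {P : ℝ → ℕ → ℕ → ℝ}

lemma P_summable (hP : MarkovCountingSemigroup P) {t : ℝ} (ht : 0 ≤ t) (x : ℕ) :
    Summable (fun y => P t x y) := by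
  by_contra h
  have h1 := hP.conservative t x ht
  rw [tsum_eq_zero_of_not_summable h] at h1
  norm_num at h1

lemma P_le_one (hP : MarkovCountingSemigroup P) {t : ℝ} (ht : 0 ≤ t) (x y : ℕ) :
    P t x y ≤ 1 := by
  have h := Summable.le_tsum (P_summable hP ht x) y (fun i _ => hP.nonneg t x i ht)
  rwa [hP.conservative t x ht] at h

noncomputable def Qe (P : ℝ → ℕ → ℕ → ℝ) (n x y : ℕ) : ENNReal := ENNReal.ofReal (P n x y)

noncomputable def pe (t : ℝ) (n : ℕ) : ENNReal := ENNReal.ofReal (poissonPMF t n)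

lemma pe_tsum {t : ℝ} (ht : 0 ≤ t) : ∑' n, pe t n = 1 := by
  unfold pe
  rw [← ENNReal.ofReal_tsum_of_nonneg (pois_nonneg ht) (pois_summable t), pois_tsum,
    ENNReal.ofReal_one]

lemma Qe_le_one (hP : MarkovCountingSemigroup P) (n x y : ℕ) : Qe P n x y ≤ 1 :=
  ENNReal.ofReal_le_one.mpr (P_le_one hP (Nat.cast_nonneg n) x y)

lemma A_ne_top (hP : MarkovCountingSemigroup P) {t : ℝ} (ht : 0 ≤ t) (x y : ℕ) :
    (∑' n, pe t n * Qe P n x y) ≠ ⊤ := by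
  have h : (∑' n, pe t n * Qe P n x y) ≤ ∑' n, pe t n := by
    refine ENNReal.tsum_le_tsum fun n => ?_
    calc pe t n * Qe P n x y ≤ pe t n * 1 :=
          mul_le_mul_right (Qe_le_one hP n x y) _
      _ = pe t n := mul_one _
  rw [pe_tsum ht] at h
  exact ne_top_of_le_ne_top ENNReal.one_ne_top h

lemma timeChanged_eq (hP : MarkovCountingSemigroup P) {t : ℝ} (ht : 0 ≤ t) (x y : ℕ) :
    (∑' n : ℕ, poissonPMF t n * P (n : ℝ) x y) = (∑' n, pe t n * Qe P n x y).toReal := by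
  unfold pe Qe
  rw [ENNReal.tsum_toReal_eq (fun n => ENNReal.mul_ne_top ENNReal.ofReal_ne_top ENNReal.ofReal_ne_top)]
  refine tsum_congr fun n => ?_
  rw [ENNReal.toReal_mul, ENNReal.toReal_ofReal (pois_nonneg ht n),
    ENNReal.toReal_ofReal (hP.nonneg _ x y (Nat.cast_nonneg n))]

lemma chapmanE (hP : MarkovCountingSemigroup P) (i j x y : ℕ) :
    Qe P (i + j) x y = ∑' z, Qe P i x z * Qe P j z y := by
  have hc := hP.chapman i j x y (Nat.cast_nonneg i) (Nat.cast_nonneg j)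
  have hsum : Summable (fun z => P (i : ℝ) x z * P (j : ℝ) z y) := by
    refine Summable.of_nonneg_of_le
      (fun z => mul_nonneg (hP.nonneg _ x z (Nat.cast_nonneg i)) (hP.nonneg _ z y (Nat.cast_nonneg j)))
      (fun z => ?_) (P_summable hP (Nat.cast_nonneg i) x)
    exact mul_le_of_le_one_right (hP.nonneg _ x z (Nat.cast_nonneg i)) (P_le_one hP (Nat.cast_nonneg j) z y)
  unfold Qe
  have hcast : ((i + j : ℕ) : ℝ) = (i : ℝ) + (j : ℝ) := by push_cast; ring
  rw [hcast, hc, ENNReal.ofReal_tsum_of_nonneg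
    (fun z => mul_nonneg (hP.nonneg _ x z (Nat.cast_nonneg i)) (hP.nonneg _ z y (Nat.cast_nonneg j))) hsum]
  exact tsum_congr fun z => ENNReal.ofReal_mul (hP.nonneg _ x z (Nat.cast_nonneg i))

def antidiagEquiv (n : ℕ) :
    {q : ℕ × ℕ // q ∈ Finset.HasAntidiagonal.antidiagonal n} ≃ {q : ℕ × ℕ // q.1 + q.2 = n} :=
  ⟨fun q => ⟨q.1, Finset.HasAntidiagonal.mem_antidiagonal.mp q.2⟩, fun q => ⟨q.1, Finset.HasAntidiagonal.mem_antidiagonal.mpr q.2⟩,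
    fun q => rfl, fun q => rfl⟩

lemma pe_conv {t u : ℝ} (ht : 0 ≤ t) (hu : 0 ≤ u) (n : ℕ) :
    pe (t + u) n = ∑' (q : {q : ℕ × ℕ // q.1 + q.2 = n}), pe t q.1.1 * pe u q.1.2 := by
  set e := antidiagEquiv n with he
  have h1 := (e.tsum_eq (fun q : {q : ℕ × ℕ // q.1 + q.2 = n} => pe t q.1.1 * pe u q.1.2)).symm
  rw [h1, tsum_congr (f := fun q : {q : ℕ × ℕ // q ∈ Finset.HasAntidiagonal.antidiagonal n} =>
        pe t (e q).1.1 * pe u (e q).1.2)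
      (g := fun q : {q : ℕ × ℕ // q ∈ Finset.HasAntidiagonal.antidiagonal n} => pe t q.1.1 * pe u q.1.2)
      (fun q => rfl), Finset.tsum_subtype (Finset.HasAntidiagonal.antidiagonal n) (fun q : ℕ × ℕ => pe t q.1 * pe u q.2)]
  unfold pe
  rw [pois_conv t u n, ENNReal.ofReal_sum_of_nonneg
    (fun q _ => mul_nonneg (pois_nonneg ht _) (pois_nonneg hu _))]
  exact Finset.sum_congr rfl fun q _ => ENNReal.ofReal_mul (pois_nonneg ht _)

lemma keyE (hP : MarkovCountingSemigroup P) {t u : ℝ} (ht : 0 ≤ t) (hu : 0 ≤ u) (x y : ℕ) :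
    ∑' n, pe (t + u) n * Qe P n x y
      = ∑' z, (∑' i, pe t i * Qe P i x z) * (∑' j, pe u j * Qe P j z y) := by
  have lhs : ∑' n, pe (t + u) n * Qe P n x y
      = ∑' (q : ℕ × ℕ), pe t q.1 * pe u q.2 * Qe P (q.1 + q.2) x y := by
    rw [← (Equiv.sigmaFiberEquiv (fun q : ℕ × ℕ => q.1 + q.2)).tsum_eq
      (fun q : ℕ × ℕ => pe t q.1 * pe u q.2 * Qe P (q.1 + q.2) x y), ENNReal.tsum_sigma']
    refine (tsum_congr fun n => ?_).symm
    rw [pe_conv ht hu n, ← ENNReal.tsum_mul_right]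
    refine tsum_congr fun q => ?_
    obtain ⟨⟨i, j⟩, hq⟩ := q
    simp only [Equiv.sigmaFiberEquiv, Equiv.coe_fn_mk]
    rw [← hq]
  rw [lhs, ENNReal.tsum_prod']
  have step : ∀ i : ℕ, (∑' j, pe t i * pe u j * Qe P (i + j) x y)
      = ∑' j, ∑' z, (pe t i * Qe P i x z) * (pe u j * Qe P j z y) := by
    intro i; refine tsum_congr fun j => ?_
    rw [chapmanE hP i j x y, ← ENNReal.tsum_mul_left]
    refine tsum_congr fun z => ?_; ring
  calc (∑' i, ∑' j, pe t i * pe u j * Qe P (i + j) x y)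
      = ∑' i, ∑' j, ∑' z, (pe t i * Qe P i x z) * (pe u j * Qe P j z y) := tsum_congr step
    _ = ∑' i, ∑' z, ∑' j, (pe t i * Qe P i x z) * (pe u j * Qe P j z y) :=
        tsum_congr fun i => ENNReal.tsum_comm
    _ = ∑' z, ∑' i, ∑' j, (pe t i * Qe P i x z) * (pe u j * Qe P j z y) := ENNReal.tsum_comm
    _ = ∑' z, (∑' i, pe t i * Qe P i x z) * (∑' j, pe u j * Qe P j z y) := by
        refine tsum_congr fun z => ?_
        rw [← ENNReal.tsum_mul_right]
        exact tsum_congr fun i => by rw [← ENNReal.tsum_mul_left]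

lemma part1 (hP : MarkovCountingSemigroup P) {t u : ℝ} (ht : 0 ≤ t) (hu : 0 ≤ u) (x y : ℕ) :
    timeChanged P (t + u) x y = ∑' z, timeChanged P t x z * timeChanged P u z y := by
  unfold timeChanged
  rw [timeChanged_eq hP (add_nonneg ht hu) x y, keyE hP ht hu x y,
    ENNReal.tsum_toReal_eq (fun z => ENNReal.mul_ne_top (A_ne_top hP ht x z) (A_ne_top hP hu z y))]
  exact tsum_congr fun z => by
    rw [ENNReal.toReal_mul, ← timeChanged_eq hP ht x z, ← timeChanged_eq hP hu z y]

lemma pois_zero {h : ℝ} : poissonPMF h 0 = Real.exp (-h) := by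
  simp [poissonPMF]

lemma pois_one {h : ℝ} : poissonPMF h 1 = Real.exp (-h) * h := by
  simp [poissonPMF, Nat.factorial]

lemma part2 (hP : MarkovCountingSemigroup P) (s k : ℕ) (hk : 1 ≤ k) :
    Tendsto (fun h : ℝ => timeChanged P h s (s + k) / h) (𝓝[>] 0)
      (𝓝 (P 1 s (s + k))) := by
  set y := s + k with hy
  set c := P 1 s y with hc
  have hne : s ≠ y := by omega
  have hc0 : 0 ≤ c := hP.nonneg 1 s y zero_le_one
  have key : ∀ h : ℝ, 0 < h →
      Real.exp (-h) * c ≤ timeChanged P h s y / h ∧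
      timeChanged P h s y / h
        ≤ Real.exp (-h) * c + (1 - Real.exp (-h) - Real.exp (-h) * h) / h := by
    intro h h0
    have h0' : (0:ℝ) ≤ h := le_of_lt h0
    set f : ℕ → ℝ := fun n => poissonPMF h n * P (n : ℝ) s y with hf
    have hfnn : ∀ n, 0 ≤ f n := fun n =>
      mul_nonneg (pois_nonneg h0' n) (hP.nonneg _ s y (Nat.cast_nonneg n))
    have hfle : ∀ n, f n ≤ poissonPMF h n := fun n =>
      mul_le_of_le_one_right (pois_nonneg h0' n) (P_le_one hP (Nat.cast_nonneg n) s y)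
    have hsum : Summable f := Summable.of_nonneg_of_le hfnn hfle (pois_summable h)
    have hf0 : f 0 = 0 := by
      have h00 : P ((0:ℕ):ℝ) s y = 0 := by
        rw [Nat.cast_zero, hP.init]; simp [hne]
      simp only [hf]
      exact mul_eq_zero_of_right _ h00
    have hf1 : f 1 = Real.exp (-h) * h * c := by
      have : P ((1:ℕ):ℝ) s y = c := by rw [Nat.cast_one, hc]
      rw [hf]; simp only [pois_one, this]
    have hT : timeChanged P h s y = ∑' n, f n := rfl
    constructor
    · -- lower bound
      have hle : f 1 ≤ ∑' n, f n := Summable.le_tsum hsum 1 (fun i _ => hfnn i)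
      rw [hT, le_div_iff₀ h0]
      calc Real.exp (-h) * c * h = f 1 := by rw [hf1]; ring
        _ ≤ ∑' n, f n := hle
    · -- upper bound
      have hsum1 : Summable (fun n => f (n + 1)) := by
        exact (summable_nat_add_iff 1).mpr hsum
      have hsum2 : Summable (fun n => f (n + 2)) := by
        exact (summable_nat_add_iff 2).mpr hsum
      have hps1 : Summable (fun n => poissonPMF h (n + 1)) :=
        (summable_nat_add_iff 1).mpr (pois_summable h)
      have hps2 : Summable (fun n => poissonPMF h (n + 2)) :=
        (summable_nat_add_iff 2).mpr (pois_summable h)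
      have hsplit : ∑' n, f n = f 0 + (f 1 + ∑' n, f (n + 2)) := by
        rw [Summable.tsum_eq_zero_add hsum, Summable.tsum_eq_zero_add hsum1]
      have hpsplit : (1:ℝ) = poissonPMF h 0 + (poissonPMF h 1 + ∑' n, poissonPMF h (n + 2)) := by
        rw [← pois_tsum h, Summable.tsum_eq_zero_add (pois_summable h), Summable.tsum_eq_zero_add hps1]
      have htail : ∑' n, f (n + 2) ≤ ∑' n, poissonPMF h (n + 2) :=
        Summable.tsum_le_tsum (fun n => hfle (n + 2)) hsum2 hps2
      have htail' : ∑' n, poissonPMF h (n + 2)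
          = 1 - Real.exp (-h) - Real.exp (-h) * h := by
        have hp := hpsplit
        rw [pois_zero, pois_one] at hp
        linarith
      rw [hT, div_le_iff₀ h0, hsplit, hf0, hf1]
      have hb := htail.trans_eq htail'
      have hdiv : (1 - Real.exp (-h) - Real.exp (-h) * h) / h * h
          = 1 - Real.exp (-h) - Real.exp (-h) * h := div_mul_cancel₀ _ (ne_of_gt h0)
      nlinarith [hb, hdiv]
  -- limits
  have hexp : Tendsto (fun h : ℝ => Real.exp (-h)) (𝓝[>] (0:ℝ)) (𝓝 1) := by
    have hcont : Continuous fun h : ℝ => Real.exp (-h) := by continuity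
    have h2 : Tendsto (fun h : ℝ => Real.exp (-h)) (𝓝[>] (0:ℝ)) (𝓝 (Real.exp (-0))) :=
      (hcont.tendsto 0).mono_left nhdsWithin_le_nhds
    simpa using h2
  have hl : Tendsto (fun h : ℝ => Real.exp (-h) * c) (𝓝[>] (0:ℝ)) (𝓝 c) := by
    have := hexp.mul_const c
    simpa using this
  have slope1 : Tendsto (fun h : ℝ => (1 - Real.exp (-h)) / h) (𝓝[>] (0:ℝ)) (𝓝 1) := by
    have hd : HasDerivAt (fun h : ℝ => 1 - Real.exp (-h)) 1 0 := by
      have h1 : HasDerivAt (fun h : ℝ => Real.exp (-h)) (-1) 0 := by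
        simpa [Function.comp_def] using (Real.hasDerivAt_exp (-0)).comp 0 (hasDerivAt_neg 0)
      simpa using h1.const_sub 1
    have hsl := hasDerivAt_iff_tendsto_slope.mp hd
    have hmono : (𝓝[>] (0:ℝ)) ≤ 𝓝[≠] (0:ℝ) :=
      nhdsWithin_mono 0 (fun x hx => ne_of_gt hx)
    refine ((hsl.mono_left hmono).congr' ?_)
    filter_upwards [self_mem_nhdsWithin] with h hh
    have hne0 : h ≠ 0 := ne_of_gt hh
    simp [slope_def_field, Real.exp_zero]
  have hu2 : Tendsto (fun h : ℝ => (1 - Real.exp (-h) - Real.exp (-h) * h) / h)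
      (𝓝[>] (0:ℝ)) (𝓝 0) := by
    have := slope1.sub hexp
    rw [sub_self] at this
    refine Tendsto.congr' ?_ this
    filter_upwards [self_mem_nhdsWithin] with h hh
    have hne0 : h ≠ 0 := ne_of_gt hh
    field_simp
  have hub : Tendsto (fun h : ℝ => Real.exp (-h) * c + (1 - Real.exp (-h) - Real.exp (-h) * h) / h)
      (𝓝[>] (0:ℝ)) (𝓝 c) := by
    have := hl.add hu2
    simpa using this
  refine tendsto_of_tendsto_of_tendsto_of_le_of_le' hl hub ?_ ?_
  · filter_upwards [self_mem_nhdsWithin] with h hh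
    exact (key h hh).1
  · filter_upwards [self_mem_nhdsWithin] with h hh
    exact (key h hh).2

end Stmt0Aux

/-- If `X` is a time-homogeneous, simple, conservative, stable Markov
counting process and `N` an independent unit-rate Poisson process, then `S(t) = X(N(t))`
is a Markov process (its transition probabilities satisfy Chapman–Kolmogorov) whose
transition rate from `s` to `s + k` (`k ≥ 1`) equals `P(X(1) = s + k | X(0) = s)`. -/
theorem stmt0 (P : ℝ → ℕ → ℕ → ℝ) (lam : ℕ → ℝ)
    (hP : MarkovCountingSemigroup P) (hSS : IsSimpleStable P lam) :
    (∀ t u x y, 0 ≤ t → 0 ≤ u →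
      timeChanged P (t + u) x y = ∑' z : ℕ, timeChanged P t x z * timeChanged P u z y) ∧
    (∀ s k : ℕ, 1 ≤ k →
      Tendsto (fun h : ℝ => timeChanged P h s (s + k) / h) (𝓝[>] 0)
        (𝓝 (P 1 s (s + k)))) := by
  refine ⟨fun t u x y ht hu => part1 hP ht hu x y, fun s k hk => part2 hP s k hk⟩
end

section
/- Under the hypotheses of the time-change theorem (simple, conservative, stable, time-homogeneous base process X, independent unit-rate Poisson time change N), the rate function of the time-changed process S(t) = X(N(t)) is λ_S(s) = 1 − e^{−λ_X(s)}. -/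
open Filter Topology

/-- The diagonal of the semigroup is multiplicative. -/
lemma diag_mul {P : ℝ → ℕ → ℕ → ℝ} (hP : MarkovCountingSemigroup P) (s : ℕ)
    {t u : ℝ} (ht : 0 ≤ t) (hu : 0 ≤ u) :
    P (t + u) s s = P t s s * P u s s := by
  rw [hP.chapman t u s s ht hu]
  refine tsum_eq_single s fun z hz => ?_
  rcases lt_or_gt_of_ne hz with h | h
  · rw [hP.counting t s z ht h, zero_mul]
  · rw [hP.counting u z s hu h, mul_zero]

lemma diag_pow {P : ℝ → ℕ → ℕ → ℝ} (hP : MarkovCountingSemigroup P) (s : ℕ)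
    {t : ℝ} (ht : 0 ≤ t) : ∀ n : ℕ, P ((n : ℝ) * t) s s = (P t s s) ^ n := by
  intro n
  induction n with
  | zero => simp [hP.init]
  | succ n ih =>
      have : ((n + 1 : ℕ) : ℝ) * t = (n : ℝ) * t + t := by push_cast; ring
      rw [this, diag_mul hP s (by positivity) ht, ih, pow_succ]

/-- The derivative of `h ↦ exp (c * h)` at `0`, in slope form. -/
lemma slope_exp (c : ℝ) :
    Tendsto (fun h : ℝ => (1 - Real.exp (c * h)) / h) (𝓝[≠] 0) (𝓝 (-c)) := by
  have hderiv : HasDerivAt (fun h : ℝ => Real.exp (c * h)) c 0 := by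
    have := (Real.hasDerivAt_exp (c * 0)).comp 0 ((hasDerivAt_id 0).const_mul c)
    simpa [Function.comp_def] using this
  have hs := hasDerivAt_iff_tendsto_slope.1 hderiv
  have : Tendsto (fun h : ℝ => -(slope (fun h : ℝ => Real.exp (c * h)) 0 h))
      (𝓝[≠] 0) (𝓝 (-c)) := hs.neg
  refine this.congr fun h => ?_
  simp only [slope_def_field, mul_zero, Real.exp_zero]
  ring

/-- Under the hypotheses of the time-change theorem, the rate function of
the time-changed process `S(t) = X(N(t))` is `λ_S(s) = 1 - exp (-λ_X(s))`. -/
theorem stmt1 (P : ℝ → ℕ → ℕ → ℝ) (lam : ℕ → ℝ)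
    (hP : MarkovCountingSemigroup P) (hSS : IsSimpleStable P lam) :
    ∀ s : ℕ, Tendsto (fun h : ℝ => (1 - timeChanged P h s s) / h) (𝓝[>] 0)
      (𝓝 (1 - Real.exp (-lam s))) := by
  intro s
  obtain ⟨hrate, -, -⟩ := hSS
  have T := hrate s
  -- P h s s → 1 as h → 0⁺
  have hid : Tendsto (fun h : ℝ => h) (𝓝[>] (0:ℝ)) (𝓝 0) :=
    tendsto_id.mono_right nhdsWithin_le_nhds
  have h1 : Tendsto (fun h : ℝ => P h s s) (𝓝[>] 0) (𝓝 1) := by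
    have hmul : Tendsto (fun h : ℝ => (1 - P h s s) / h * h) (𝓝[>] 0) (𝓝 (lam s * 0)) :=
      T.mul hid
    rw [mul_zero] at hmul
    have heq : Tendsto (fun h : ℝ => 1 - P h s s) (𝓝[>] 0) (𝓝 0) := by
      refine hmul.congr' ?_
      filter_upwards [self_mem_nhdsWithin] with h (hh : 0 < h)
      exact div_mul_cancel₀ _ (ne_of_gt hh)
    have h2 : Tendsto (fun h : ℝ => 1 - (1 - P h s s)) (𝓝[>] 0) (𝓝 (1 - 0)) :=
      tendsto_const_nhds.sub heq
    simpa using h2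
  -- the sequence 1/n tends to 0 within (0, ∞)
  have hu : Tendsto (fun n : ℕ => 1 / (n : ℝ)) atTop (𝓝[>] 0) := by
    refine tendsto_nhdsWithin_of_tendsto_nhds_of_eventually_within _
      tendsto_one_div_atTop_nhds_zero_nat ?_
    filter_upwards [eventually_gt_atTop 0] with n hn
    exact one_div_pos.2 (show (0:ℝ) < n from Nat.cast_pos.2 hn)
  -- positivity of P 1 s s
  have hpos : ∀ᶠ h : ℝ in (𝓝[>] 0), 0 < P h s s :=
    h1.eventually (eventually_gt_nhds one_pos)
  obtain ⟨m, hm1, hmpos⟩ : ∃ m : ℕ, 0 < m ∧ 0 < P (1 / (m : ℝ)) s s := by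
    obtain ⟨m, hm, hp⟩ := ((hu.eventually hpos).and (eventually_gt_atTop 0)).exists
    exact ⟨m, hp, hm⟩
  have hmne : (m : ℝ) ≠ 0 := Nat.cast_ne_zero.2 hm1.ne'
  have hone : ((m : ℝ)) * (1 / (m : ℝ)) = 1 := by field_simp
  have hf1 : P 1 s s = (P (1 / (m : ℝ)) s s) ^ m := by
    have := diag_pow hP s (show (0:ℝ) ≤ 1 / m by positivity) m
    rwa [hone] at this
  have hf1pos : 0 < P 1 s s := hf1 ▸ pow_pos hmpos m
  set f1 := P 1 s s with hf1def
  set c := Real.log f1 with hc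
  have hexpc : Real.exp c = f1 := Real.exp_log hf1pos
  -- for each n ≥ 1, P (1/n) s s = exp (c / n)
  have ha : ∀ n : ℕ, 0 < n → P (1 / (n : ℝ)) s s = Real.exp (c / n) := by
    intro n hn
    have hnne : (n : ℝ) ≠ 0 := Nat.cast_ne_zero.2 hn.ne'
    have h1n : ((n : ℝ)) * (1 / (n : ℝ)) = 1 := by field_simp
    have hpow : (P (1 / (n : ℝ)) s s) ^ n = f1 := by
      rw [← diag_pow hP s (by positivity), h1n, ← hf1def]
    have hpow2 : (Real.exp (c / n)) ^ n = f1 := by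
      rw [← Real.exp_nat_mul, mul_div_cancel₀ _ hnne, hexpc]
    exact (pow_left_inj₀ (hP.nonneg _ _ _ (by positivity)) (Real.exp_nonneg _)
      hn.ne').1 (hpow.trans hpow2.symm)
  -- identify c = -lam s
  have hu' : Tendsto (fun n : ℕ => 1 / (n : ℝ)) atTop (𝓝[≠] 0) :=
    hu.mono_right (nhdsWithin_mono _ fun x hx => ne_of_gt hx)
  have Tseq : Tendsto (fun n : ℕ => (1 - P (1 / (n : ℝ)) s s) / (1 / (n : ℝ)))
      atTop (𝓝 (lam s)) := T.comp hu
  have Tseq2 : Tendsto (fun n : ℕ => (1 - Real.exp (c * (1 / (n : ℝ)))) / (1 / (n : ℝ)))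
      atTop (𝓝 (-c)) := (slope_exp c).comp hu'
  have heqseq : (fun n : ℕ => (1 - P (1 / (n : ℝ)) s s) / (1 / (n : ℝ))) =ᶠ[atTop]
      (fun n : ℕ => (1 - Real.exp (c * (1 / (n : ℝ)))) / (1 / (n : ℝ))) := by
    filter_upwards [eventually_gt_atTop 0] with n hn
    rw [ha n hn, mul_one_div]
  have hlam : lam s = -c := tendsto_nhds_unique (Tseq.congr' heqseq) Tseq2
  have hexp : Real.exp (-lam s) = f1 := by rw [hlam, neg_neg, hexpc]
  -- compute the time-changed transition probability
  have key : ∀ h : ℝ, timeChanged P h s s = Real.exp (h * (f1 - 1)) := by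
    intro h
    have hterm : ∀ n : ℕ, poissonPMF h n * P ((n : ℝ)) s s
        = Real.exp (-h) * ((h * f1) ^ n / n.factorial) := by
      intro n
      have : P ((n : ℝ)) s s = f1 ^ n := by
        rw [hf1def]
        simpa using diag_pow hP s zero_le_one n
      rw [poissonPMF, this, mul_pow]
      ring
    rw [timeChanged]
    simp_rw [hterm]
    rw [tsum_mul_left]
    have hexpsum : (∑' n : ℕ, (h * f1) ^ n / n.factorial) = Real.exp (h * f1) := by
      rw [Real.exp_eq_exp_ℝ, NormedSpace.exp_eq_tsum_div]
    rw [hexpsum, ← Real.exp_add]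
    ring_nf
  -- final limit
  have hfinal : Tendsto (fun h : ℝ => (1 - Real.exp ((f1 - 1) * h)) / h) (𝓝[>] 0)
      (𝓝 (-(f1 - 1))) :=
    (slope_exp (f1 - 1)).mono_left (nhdsWithin_mono _ fun x hx => ne_of_gt hx)
  have : -(f1 - 1) = 1 - Real.exp (-lam s) := by rw [hexp]; ring
  rw [← this]
  refine hfinal.congr fun h => ?_
  rw [key, mul_comm]
end
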